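/- arXiv:2008.07322 — 3 statements merged into one kernel-verified Lean document; each statement's English description precedes it below -/
import Mathlib

section
/- If G is a finite Z-group (all Sylow subgroups cyclic) with trivial center, then for any two nonidentity elements x, y of G, the subgroup generated by x and y is cyclic if and only if x and y commute. -/
/-- The cyclic graph of a group: vertices are the nonidentity elements,
two distinct vertices are adjacent iff they generate a cyclic subgroup. -/
def cyclicGraph (G : Type*) [Group G] : SimpleGraph {g : G // g ≠ 1} where
  Adj x y := x ≠ y ∧ IsCyclic (Subgroup.closure ({x.1, y.1} : Set G))
  symm := by
    constructor
    rintro x y ⟨hne, hc⟩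
    exact ⟨hne.symm, by rwa [Set.pair_comm]⟩
  loopless := by constructor; rintro x ⟨hne, -⟩; exact hne rfl

/-- A group is a Frobenius group if it has a nontrivial proper subgroup `H`
with `H ∩ H^g = 1` for every `g ∉ H`. -/
def IsFrobenius (G : Type*) [Group G] : Prop :=
  ∃ H : Subgroup G, H ≠ ⊥ ∧ H ≠ ⊤ ∧
    ∀ g : G, g ∉ H → ∀ x : G, x ∈ H → g * x * g⁻¹ ∈ H → x = 1

/-- A group is generalized quaternion if it is isomorphic to `QuaternionGroup (2 ^ m)`
for some `m ≥ 1` (i.e. a generalized quaternion group of order `2 ^ (m + 2)`). -/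
def IsGeneralizedQuaternion (P : Type*) [Group P] : Prop :=
  ∃ m : ℕ, 1 ≤ m ∧ Nonempty (P ≃* QuaternionGroup (2 ^ m))


theorem zgroup_comm_cyclic {H : Type*} [CommGroup H] [Finite H] [IsZGroup H] : IsCyclic H := by
  apply IsCyclic.of_exponent_eq_card
  refine Nat.dvd_antisymm Group.exponent_dvd_nat_card ?_
  rw [Nat.dvd_iff_prime_pow_dvd_dvd]
  intro p k hp hdvd
  have := Fact.mk hp
  obtain ⟨P : Sylow p H⟩ := (inferInstance : Nonempty (Sylow p H))
  have hcard : Nat.card P = p ^ (Nat.card H).factorization p := P.card_eq_multiplicity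
  have hcyc : IsCyclic P := IsZGroup.isZGroup p hp P
  obtain ⟨g, hg⟩ := hcyc.exists_generator
  have horder : orderOf g = Nat.card P := orderOf_eq_card_of_forall_mem_zpowers hg
  have h1 : p ^ k ∣ p ^ (Nat.card H).factorization p := by
    apply pow_dvd_pow
    exact (Nat.Prime.pow_dvd_iff_le_factorization hp Nat.card_pos.ne').mp hdvd
  refine h1.trans ?_
  rw [← hcard, ← horder, ← Subgroup.orderOf_coe g]
  exact Monoid.order_dvd_exponent _

theorem stmt_0 {G : Type*} [Group G] [Finite G] (hZ : IsZGroup G)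
    (hc : Subgroup.center G = ⊥) (x y : G) (hx : x ≠ 1) (hy : y ≠ 1) :
    IsCyclic (Subgroup.closure ({x, y} : Set G)) ↔ Commute x y := by
  constructor
  · intro h
    have hxm : x ∈ Subgroup.closure ({x, y} : Set G) :=
      Subgroup.subset_closure (Set.mem_insert _ _)
    have hym : y ∈ Subgroup.closure ({x, y} : Set G) :=
      Subgroup.subset_closure (Set.mem_insert_of_mem _ rfl)
    letI := h.commGroup
    have := mul_comm (⟨x, hxm⟩ : Subgroup.closure ({x, y} : Set G)) ⟨y, hym⟩
    exact congrArg Subtype.val this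
  · intro h
    letI : CommGroup (Subgroup.closure ({x, y} : Set G)) :=
      Subgroup.closureCommGroupOfComm (by
        rintro a (rfl | rfl) b (rfl | rfl)
        · rfl
        · exact h
        · exact h.symm
        · rfl)
    exact zgroup_comm_cyclic
end

section
/- If G is a finite Frobenius group, then the cyclic graph Δ(G) is disconnected. -/
theorem stmt_4 {G : Type*} [Group G] [Finite G] (hF : IsFrobenius G) :
    ¬ (cyclicGraph G).Connected := by
  obtain ⟨H, hbot, htop, hfrob⟩ := hF
  obtain ⟨x, hx1, hxH⟩ : ∃ x : G, x ≠ 1 ∧ x ∈ H := by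
    by_contra h
    push_neg at h
    exact hbot (by
      ext g
      simp only [Subgroup.mem_bot]
      constructor
      · intro hg
        by_contra hg1
        exact (h g hg1) hg
      · rintro rfl; exact H.one_mem)
  obtain ⟨y, hyH⟩ : ∃ y : G, y ∉ H := by
    by_contra h
    push_neg at h
    exact htop (by ext g; simpa using h g)
  have hy1 : y ≠ 1 := fun h => hyH (h ▸ H.one_mem)
  intro hconn
  obtain ⟨w⟩ := hconn.preconnected ⟨x, hx1⟩ ⟨y, hy1⟩
  have key : ∀ (a b : {g : G // g ≠ 1}), (cyclicGraph G).Walk a b → a.1 ∈ H → b.1 ∈ H := by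
    intro a b w
    induction w with
    | nil => exact id
    | @cons a c b h p ih =>
      intro ha
      apply ih
      obtain ⟨hne, hcyc⟩ := h
      set K := Subgroup.closure ({a.1, c.1} : Set G) with hK
      have haK : a.1 ∈ K := Subgroup.subset_closure (Set.mem_insert _ _)
      have hcK : c.1 ∈ K := Subgroup.subset_closure (Set.mem_insert_of_mem _ rfl)
      have hcomm : a.1 * c.1 = c.1 * a.1 := by
        haveI := hcyc
        letI : CommGroup K := IsCyclic.commGroup
        have := mul_comm (⟨a.1, haK⟩ : K) ⟨c.1, hcK⟩
        exact congrArg Subtype.val this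
      by_contra hcH
      apply a.2
      apply hfrob c.1 hcH a.1 ha
      have : c.1 * a.1 * c.1⁻¹ = a.1 := by
        rw [← hcomm, mul_assoc, mul_inv_cancel, mul_one]
      rw [this]; exact ha
  exact hyH (key _ _ w hxH)
end

section
/- If the cyclic graph Δ(G) of a finite group G has a dominating vertex, then G has a unique subgroup of order p for some prime p, and this subgroup is contained in the center of G. -/
lemma aux_cyc {C : Type*} [Group C] [Finite C] [IsCyclic C] {p : ℕ} (hp : p.Prime)
    {a q : C} (ha : orderOf a = p) (hq : orderOf q = p) : q ∈ Subgroup.zpowers a := by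
  classical
  cases nonempty_fintype C
  have hS := IsCyclic.card_pow_eq_one_le (α := C) (n := p) hp.pos
  set S : Finset C := Finset.univ.filter fun b => b ^ p = 1 with hSdef
  have hsub : ((Subgroup.zpowers a : Subgroup C) : Set C).toFinset ⊆ S := by
    intro x hx
    simp only [Set.mem_toFinset, SetLike.mem_coe, Subgroup.mem_zpowers_iff] at hx
    obtain ⟨k, rfl⟩ := hx
    simp only [hSdef, Finset.mem_filter, Finset.mem_univ, true_and]
    rw [← zpow_natCast, ← zpow_mul, mul_comm, zpow_mul, zpow_natCast, ← ha,
      pow_orderOf_eq_one, one_zpow]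
  have hcard : ((Subgroup.zpowers a : Subgroup C) : Set C).toFinset.card = p := by
    rw [Set.toFinset_card]
    have e : Fintype.card ((Subgroup.zpowers a : Subgroup C) : Set C) =
        Nat.card (Subgroup.zpowers a) := by
      rw [← Nat.card_eq_fintype_card]
      exact Nat.card_congr (Equiv.cast (by rw [SetLike.coe_sort_coe]))
    rw [e, Nat.card_zpowers, ha]
  have heq : S = ((Subgroup.zpowers a : Subgroup C) : Set C).toFinset :=
    (Finset.eq_of_subset_of_card_le hsub (by rw [hcard]; exact hS)).symm
  have hqS : q ∈ S := by
    simp only [hSdef, Finset.mem_filter, Finset.mem_univ, true_and, ← hq, pow_orderOf_eq_one]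
  rw [heq] at hqS
  simpa using hqS


theorem stmt_10 {G : Type*} [Group G] [Finite G] (z : G) (hz : z ≠ 1)
    (hdom : ∀ g : G, g ≠ 1 → g ≠ z → IsCyclic (Subgroup.closure ({z, g} : Set G))) :
    ∃ p : ℕ, p.Prime ∧ ∃ P : Subgroup G, Nat.card P = p ∧
      P ≤ Subgroup.center G ∧ ∀ Q : Subgroup G, Nat.card Q = p → Q = P := by
  -- z is central
  have hcomm : ∀ g : G, g * z = z * g := by
    intro g
    rcases eq_or_ne g 1 with rfl | hg1; · simp
    rcases eq_or_ne g z with rfl | hgz; · rfl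
    have hc := hdom g hg1 hgz
    letI := hc.commGroup
    have hzmem : z ∈ Subgroup.closure ({z, g} : Set G) :=
      Subgroup.subset_closure (by simp)
    have hgmem : g ∈ Subgroup.closure ({z, g} : Set G) :=
      Subgroup.subset_closure (by simp)
    have := mul_comm (⟨g, hgmem⟩ : Subgroup.closure ({z, g} : Set G)) ⟨z, hzmem⟩
    exact congrArg Subtype.val this
  have hzc : z ∈ Subgroup.center G := Subgroup.mem_center_iff.mpr hcomm
  set n := orderOf z with hn
  have hn1 : n ≠ 1 := by simpa [hn, orderOf_eq_one_iff] using hz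
  set p := n.minFac with hp
  have hpp : p.Prime := Nat.minFac_prime hn1
  have hpd : p ∣ n := Nat.minFac_dvd n
  set a := z ^ (n / p) with hadef
  have hord : orderOf a = p := by
    rw [hadef, orderOf_pow]
    have hn0 : 0 < n := hn ▸ orderOf_pos z
    rw [← hn, Nat.gcd_eq_right (Nat.div_dvd_of_dvd hpd),
      Nat.div_div_self hpd hn0.ne']
  refine ⟨p, hpp, Subgroup.zpowers a, by simpa [Nat.card_zpowers] using hord, ?_, ?_⟩
  · rw [Subgroup.zpowers_le]
    exact Subgroup.pow_mem _ hzc _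
  · intro Q hQ
    have hQnt : Nontrivial Q := Finite.one_lt_card_iff_nontrivial.mp (by rw [hQ]; exact hpp.one_lt)
    obtain ⟨q', hq'⟩ := exists_ne (1 : Q)
    have hqQ : (q' : G) ∈ Q := q'.2
    have hq1 : (q' : G) ≠ 1 := fun h => hq' (Subtype.ext h)
    have hqord : orderOf (q' : G) = p := by
      rw [Subgroup.orderOf_coe]
      have hd : orderOf q' ∣ p := hQ ▸ orderOf_dvd_natCard q'
      rcases (Nat.Prime.eq_one_or_self_of_dvd hpp _ hd) with h | h
      · exact absurd (orderOf_eq_one_iff.mp h) hq'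
      · exact h
    have hmem : (q' : G) ∈ Subgroup.zpowers a := by
      rcases eq_or_ne (q' : G) z with hqz | hqz
      · have hnp : n = p := by rw [hn, ← hqz, hqord]
        have : a = z := by rw [hadef, hnp, Nat.div_self hpp.pos, pow_one]
        rw [this, ← hqz]
        exact Subgroup.mem_zpowers _
      · have hc := hdom _ hq1 hqz
        set C := Subgroup.closure ({z, (q' : G)} : Set G) with hC
        have hzC : z ∈ C := Subgroup.subset_closure (by simp)
        have haC : a ∈ C := Subgroup.pow_mem _ hzC _
        have hqC : (q' : G) ∈ C := Subgroup.subset_closure (by simp)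
        have := aux_cyc (C := C) hpp (a := ⟨a, haC⟩) (q := ⟨(q' : G), hqC⟩)
          (by rw [Subgroup.orderOf_mk]; exact hord)
          (by rw [Subgroup.orderOf_mk]; exact hqord)
        obtain ⟨k, hk⟩ := this
        exact ⟨k, by simpa [Subtype.ext_iff] using hk⟩
    have h1 : Subgroup.zpowers (q' : G) = Q :=
      Subgroup.eq_of_le_of_card_ge (Subgroup.zpowers_le.mpr hqQ)
        (le_of_eq (by rw [hQ, Nat.card_zpowers, hqord]))
    have h2 : Subgroup.zpowers (q' : G) = Subgroup.zpowers a :=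
      Subgroup.eq_of_le_of_card_ge (Subgroup.zpowers_le.mpr hmem)
        (le_of_eq (by rw [Nat.card_zpowers, Nat.card_zpowers, hqord, hord]))
    rw [← h1, h2]
end
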